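/- Let c ∈ ℝ^n with c_i > 0 and ∑ c_i = 1, and let k_{ij} = k_{ji} ≥ 0 with k_{ij} > 0 for i ≠ j. Define the Maxwell–Stefan matrix D^{MS}(c)_{ij} = δ_{ij} ∑_{ℓ=1}^n k_{iℓ} c_ℓ − k_{ij} √(c_i c_j). Then D^{MS}(c) is symmetric and positive semidefinite, and √c = (√c_1,…,√c_n) lies in its kernel. -/

import Mathlib

open Matrix

/-- The Maxwell--Stefan matrix `D^{MS}(c)`. -/
noncomputable def DMS (n : ℕ) (k : Matrix (Fin n) (Fin n) ℝ) (c : Fin n → ℝ) :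
    Matrix (Fin n) (Fin n) ℝ :=
  Matrix.of fun i j =>
    (if i = j then (1:ℝ) else 0) * (∑ l, k i l * c l) -
      k i j * Real.sqrt (c i * c j)

theorem DMS_symm_psd_kernel (n : ℕ) (k : Matrix (Fin n) (Fin n) ℝ)
    (c : Fin n → ℝ) (hc : ∀ i, 0 < c i) (hsum : ∑ i, c i = 1)
    (hksymm : ∀ i j, k i j = k j i) (hknn : ∀ i j, 0 ≤ k i j)
    (hkpos : ∀ i j, i ≠ j → 0 < k i j) :
    (DMS n k c)ᵀ = DMS n k c ∧ (DMS n k c).PosSemidef ∧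
      (DMS n k c).mulVec (fun i => Real.sqrt (c i)) = 0 := by
  set s : Fin n → ℝ := fun i => Real.sqrt (c i) with hs
  have hsq : ∀ i, s i * s i = c i := fun i => Real.mul_self_sqrt (hc i).le
  have hprod : ∀ i j, Real.sqrt (c i * c j) = s i * s j := fun i j =>
    Real.sqrt_mul (hc i).le (c j)
  have hsymmD : (DMS n k c)ᵀ = DMS n k c := by
    ext i j
    simp only [DMS, transpose_apply, of_apply]
    by_cases h : i = j
    · subst h; rfl
    · simp only [h, Ne.symm h, if_false, zero_mul, zero_sub]
      rw [hksymm j i, mul_comm (c j) (c i)]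
  -- quadratic form expansion
  have key : ∀ x : Fin n → ℝ, ∀ i,
      x i * (∑ j, (DMS n k c) i j * x j)
        = ∑ j, k i j * c j * x i ^ 2 - ∑ j, k i j * (s i * s j) * (x i * x j) := by
    intro x i
    simp only [DMS, of_apply]
    have h1 : (∑ j, ((if i = j then (1:ℝ) else 0) * (∑ l, k i l * c l)
          - k i j * Real.sqrt (c i * c j)) * x j)
        = ∑ j, ((if i = j then (∑ l, k i l * c l) * x i else 0)
            - k i j * (s i * s j) * x j) := by
      refine Finset.sum_congr rfl fun j _ => ?_
      rw [hprod i j]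
      by_cases h : i = j
      · subst h; simp; ring
      · simp [h]
    rw [h1, Finset.sum_sub_distrib, Finset.sum_ite_eq Finset.univ i,
      if_pos (Finset.mem_univ i), mul_sub, Finset.mul_sum, Finset.sum_mul, Finset.mul_sum]
    congr 1
    · exact Finset.sum_congr rfl fun j _ => by ring
    · exact Finset.sum_congr rfl fun j _ => by ring
  have hswap : ∀ x : Fin n → ℝ,
      (∑ i, ∑ j, k i j * c i * x j ^ 2) = ∑ i, ∑ j, k i j * c j * x i ^ 2 := by
    intro x
    rw [Finset.sum_comm]
    exact Finset.sum_congr rfl fun j _ => Finset.sum_congr rfl fun i _ => by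
      rw [hksymm i j]
  have hquad : ∀ x : Fin n → ℝ, 0 ≤ x ⬝ᵥ (DMS n k c).mulVec x := by
    intro x
    have hQ : x ⬝ᵥ (DMS n k c).mulVec x
        = (∑ i, ∑ j, k i j * c j * x i ^ 2)
          - ∑ i, ∑ j, k i j * (s i * s j) * (x i * x j) := by
      simp only [dotProduct, mulVec]
      rw [← Finset.sum_sub_distrib]
      exact Finset.sum_congr rfl fun i _ => key x i
    have hR : (∑ i, ∑ j, k i j * (s j * x i - s i * x j) ^ 2)
        = (∑ i, ∑ j, k i j * c j * x i ^ 2) + (∑ i, ∑ j, k i j * c i * x j ^ 2)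
          - 2 * ∑ i, ∑ j, k i j * (s i * s j) * (x i * x j) := by
      rw [Finset.mul_sum, ← Finset.sum_add_distrib, ← Finset.sum_sub_distrib]
      refine Finset.sum_congr rfl fun i _ => ?_
      rw [Finset.mul_sum, ← Finset.sum_add_distrib, ← Finset.sum_sub_distrib]
      refine Finset.sum_congr rfl fun j _ => ?_
      have h1 := hsq i
      have h2 := hsq j
      linear_combination (k i j * x i ^ 2) * h2 + (k i j * x j ^ 2) * h1
    have hRnn : 0 ≤ ∑ i, ∑ j, k i j * (s j * x i - s i * x j) ^ 2 := by
      refine Finset.sum_nonneg fun i _ => Finset.sum_nonneg fun j _ => ?_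
      exact mul_nonneg (hknn i j) (sq_nonneg _)
    rw [hswap x] at hR
    linarith [hR, hRnn, hQ]
  have hker : (DMS n k c).mulVec s = 0 := by
    funext i
    simp only [mulVec, dotProduct, DMS, of_apply, Pi.zero_apply]
    have h1 : (∑ j, ((if i = j then (1:ℝ) else 0) * (∑ l, k i l * c l)
          - k i j * Real.sqrt (c i * c j)) * s j)
        = ∑ j, ((if i = j then (∑ l, k i l * c l) * s i else 0)
            - k i j * c j * s i) := by
      refine Finset.sum_congr rfl fun j _ => ?_
      rw [hprod i j]
      have := hsq j
      by_cases h : i = j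
      · subst h; simp; linear_combination (-(k i i * s i)) * this
      · simp [h]; linear_combination (k i j * s i) * this
    rw [h1, Finset.sum_sub_distrib, Finset.sum_ite_eq Finset.univ i,
      if_pos (Finset.mem_univ i)]
    rw [show (∑ j, k i j * c j * s i) = (∑ j, k i j * c j) * s i from
      (Finset.sum_mul _ _ _).symm]
    ring
  refine ⟨hsymmD, ⟨?_, fun x => ?_⟩, hker⟩
  · rw [Matrix.IsHermitian, conjTranspose_eq_transpose_of_trivial]
    exact hsymmD
  · simpa [dotProduct, mulVec, Finsupp.sum_fintype, Finset.mul_sum, mul_assoc] using hquad (fun i => x i)
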